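/- arXiv:1408.5701 — 3 statements merged into one kernel-verified Lean document; each statement's English description precedes it below -/
import Mathlib

section
/- Let μ be a finite Borel measure on [0,1] and f(x) = ∫_{[0,1]} x/((1−t)x + t) dμ(t) for x > 0. Then f(x) = 1 for all x > 0 if and only if μ is the Dirac measure at 0. -/
open MeasureTheory

/-- For a finite Borel measure `μ` on `[0,1]` and `f x = ∫ x/((1-t)x+t) dμ(t)` for `x > 0`,
`f` is constantly `1` on `(0,∞)` iff `μ` is the Dirac measure at `0`. -/

theorem stmt_8 (μ : Measure (Set.Icc (0:ℝ) 1)) [IsFiniteMeasure μ]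
    (f : ℝ → ℝ) (hf : ∀ x > (0:ℝ), f x = ∫ t, x / ((1 - (t:ℝ)) * x + (t:ℝ)) ∂μ) :
    (∀ x > (0:ℝ), f x = 1) ↔ μ = Measure.dirac ⟨0, by norm_num⟩ := by
  constructor
  · intro h
    -- total mass one from x = 1
    have h1 : (μ Set.univ).toReal = 1 := by
      have h2 := (hf 1 one_pos).symm.trans (h 1 one_pos)
      have he : (fun t : Set.Icc (0:ℝ) 1 => (1:ℝ) / ((1 - (t:ℝ)) * 1 + (t:ℝ)))
          = fun _ => (1:ℝ) := by funext t; norm_num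
      rw [he, integral_const, smul_eq_mul, mul_one] at h2
      exact h2
    have hmass : μ Set.univ = 1 := (ENNReal.toReal_eq_one_iff (μ Set.univ)).mp h1
    have hne0 : ∀ t : Set.Icc (0:ℝ) 1, (1 : ℝ) + (t:ℝ) ≠ 0 := by
      intro t; have := t.2.1; positivity
    have hcont2 : Continuous fun t : Set.Icc (0:ℝ) 1 => 1 / (1 + (t:ℝ)) :=
      continuous_const.div (continuous_const.add continuous_subtype_val) hne0
    have hint2 : Integrable (fun t : Set.Icc (0:ℝ) 1 => 1 / (1 + (t:ℝ))) μ :=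
      hcont2.integrable_of_hasCompactSupport (HasCompactSupport.of_compactSpace _)
    have hint : Integrable (fun t : Set.Icc (0:ℝ) 1 => 1 - 1 / (1 + (t:ℝ))) μ :=
      (integrable_const 1).sub hint2
    have heq : ∫ t : Set.Icc (0:ℝ) 1, (1 - 1 / (1 + (t:ℝ))) ∂μ = 0 := by
      have h2 := (hf (1/2) (by norm_num)).symm.trans (h (1/2) (by norm_num))
      have hsimp : (fun t : Set.Icc (0:ℝ) 1 => (1:ℝ)/2 / ((1 - (t:ℝ)) * (1/2) + (t:ℝ)))
          = fun t : Set.Icc (0:ℝ) 1 => 1 / (1 + (t:ℝ)) := by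
        funext t
        have ht : (0:ℝ) ≤ (t:ℝ) := t.2.1
        rw [div_eq_div_iff] <;> nlinarith
      rw [hsimp] at h2
      rw [integral_sub (integrable_const 1) hint2, integral_const, smul_eq_mul, mul_one,
        measureReal_def, h1, h2]
      ring
    have hnn : 0 ≤ fun t : Set.Icc (0:ℝ) 1 => 1 - 1 / (1 + (t:ℝ)) := by
      intro t
      have ht0 : (0:ℝ) ≤ (t:ℝ) := t.2.1
      have hpos : (0:ℝ) < 1 + (t:ℝ) := by linarith
      simp only [Pi.zero_apply, sub_nonneg]
      rw [div_le_one hpos]; linarith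
    have hae := (integral_eq_zero_iff_of_nonneg hnn hint).mp heq
    have hae' : μ {t : Set.Icc (0:ℝ) 1 | ¬ (1 - 1 / (1 + (t:ℝ)) = 0)} = 0 := by
      have := ae_iff.mp hae
      simpa using this
    have hz : μ {(⟨0, by norm_num⟩ : Set.Icc (0:ℝ) 1)}ᶜ = 0 := by
      have hset : {t : Set.Icc (0:ℝ) 1 | ¬ (1 - 1 / (1 + (t:ℝ)) = 0)}
          = {(⟨0, by norm_num⟩ : Set.Icc (0:ℝ) 1)}ᶜ := by
        ext t
        have ht0 : (0:ℝ) ≤ (t:ℝ) := t.2.1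
        have hpos : (0:ℝ) < 1 + (t:ℝ) := by linarith
        simp only [Set.mem_setOf_eq, Set.mem_compl_iff, Set.mem_singleton_iff]
        constructor
        · intro hne heq0
          apply hne; rw [heq0]; norm_num
        · intro hne heq0
          apply hne
          have ht1 : (1:ℝ) / (1 + (t:ℝ)) = 1 := by linarith
          have hne' : (1:ℝ) + (t:ℝ) ≠ 0 := hpos.ne'
          field_simp at ht1
          exact Subtype.ext (by show (t:ℝ) = 0; linarith)
      rw [← hset]; exact hae'
    ext s hs
    rw [Measure.dirac_apply' _ hs]
    by_cases hmem : (⟨0, by norm_num⟩ : Set.Icc (0:ℝ) 1) ∈ s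
    · have h0 : μ {(⟨0, by norm_num⟩ : Set.Icc (0:ℝ) 1)} = 1 := by
        have hadd := measure_add_measure_compl (μ := μ)
          (s := {(⟨0, by norm_num⟩ : Set.Icc (0:ℝ) 1)}) (measurableSet_singleton _)
        rw [hz, add_zero] at hadd
        rw [hadd, hmass]
      have hle : μ s ≤ 1 := hmass ▸ measure_mono (Set.subset_univ s)
      have hge : 1 ≤ μ s := h0 ▸ measure_mono (Set.singleton_subset_iff.mpr hmem)
      rw [Set.indicator_of_mem hmem, Pi.one_apply]
      exact le_antisymm hle hge
    · have hs0 : μ s = 0 := by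
        refine measure_mono_null (fun t ht => ?_) hz
        simp only [Set.mem_compl_iff, Set.mem_singleton_iff]
        rintro rfl; exact hmem ht
      rw [Set.indicator_of_notMem hmem, hs0]
  · intro hμ x hx
    subst hμ
    rw [hf x hx, integral_dirac]
    simp [ne_of_gt hx]
end

section
/- Let μ be a probability Borel measure on [0,1] and f(x) = ∫_{[0,1]} x/((1−t)x + t) dμ(t) for x > 0. Then f(x) = x for all x > 0 if and only if μ is the Dirac measure at 1. -/
open MeasureTheory

lemma my_dirac_of_singleton {α : Type*} [MeasurableSpace α] [MeasurableSingletonClass α]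
    (μ : Measure α) [IsProbabilityMeasure μ] (a : α) (h : μ {a} = 1) :
    μ = Measure.dirac a := by
  ext s hs
  rw [Measure.dirac_apply' _ hs]
  by_cases ha : a ∈ s
  · have h1 : (1:ENNReal) ≤ μ s := h ▸ measure_mono (Set.singleton_subset_iff.2 ha)
    have h2 : μ s ≤ 1 := prob_le_one
    simp [Set.indicator_of_mem ha, le_antisymm h2 h1]
  · have hsub : s ⊆ {a}ᶜ := fun x hx => by
      simp only [Set.mem_compl_iff, Set.mem_singleton_iff]
      rintro rfl; exact ha hx
    have hc : μ {a}ᶜ = 0 := by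
      rw [measure_compl (measurableSet_singleton a) (measure_ne_top μ _), h, measure_univ,
        tsub_self]
    simp [Set.indicator_of_notMem ha, measure_mono_null hsub hc]

/-- For a probability Borel measure `μ` on `[0,1]` and `f x = ∫ x/((1-t)x+t) dμ(t)` for `x > 0`,
`f` is the identity on `(0,∞)` iff `μ` is the Dirac measure at `1`. -/
theorem stmt_9 (μ : Measure (Set.Icc (0:ℝ) 1)) [IsProbabilityMeasure μ]
    (f : ℝ → ℝ) (hf : ∀ x > (0:ℝ), f x = ∫ t, x / ((1 - (t:ℝ)) * x + (t:ℝ)) ∂μ) :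
    (∀ x > (0:ℝ), f x = x) ↔ μ = Measure.dirac ⟨1, by norm_num⟩ := by
  set a : Set.Icc (0:ℝ) 1 := ⟨1, by norm_num⟩ with ha
  constructor
  · intro h
    -- denominator bounds
    have hden : ∀ (n : ℕ) (t : Set.Icc (0:ℝ) 1), (1:ℝ) ≤ (1 - (t:ℝ)) * (n+1) + t := by
      intro n t
      obtain ⟨t, ht0, ht1⟩ := t
      simp only
      nlinarith [Nat.cast_nonneg (α := ℝ) n]
    have key : ∀ n : ℕ, ∫ t, (1:ℝ) / ((1 - (t:ℝ)) * (n+1) + t) ∂μ = 1 := by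
      intro n
      have hx : (0:ℝ) < n + 1 := by positivity
      have h1 := (hf _ hx).symm.trans (h _ hx)
      have h2 : ∀ t : Set.Icc (0:ℝ) 1,
          ((n:ℝ)+1) / ((1 - (t:ℝ)) * (n+1) + t) = ((n:ℝ)+1) * (1 / ((1 - (t:ℝ)) * (n+1) + t)) := by
        intro t; ring
      rw [show (∫ t, ((n:ℝ)+1) / ((1 - (t:ℝ)) * ((n:ℝ)+1) + (t:ℝ)) ∂μ)
          = ∫ t, ((n:ℝ)+1) * (1 / ((1 - (t:ℝ)) * ((n:ℝ)+1) + (t:ℝ))) ∂μ from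
        integral_congr_ae (Filter.Eventually.of_forall h2),
        integral_const_mul] at h1
      have := h1
      field_simp at this ⊢
      linarith [this]
    -- dominated convergence
    have hconv : Filter.Tendsto (fun n : ℕ => ∫ t, (1:ℝ) / ((1 - (t:ℝ)) * (n+1) + t) ∂μ)
        Filter.atTop (nhds (∫ t, Set.indicator {a} (1 : Set.Icc (0:ℝ) 1 → ℝ) t ∂μ)) := by
      apply tendsto_integral_of_dominated_convergence (fun _ => (1:ℝ))
      · intro n
        apply Continuous.aestronglyMeasurable
        apply continuous_const.div
        · exact ((continuous_const.sub continuous_subtype_val).mul continuous_const).add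
            continuous_subtype_val
        · intro t; linarith [hden n t]
      · exact integrable_const 1
      · intro n
        filter_upwards with t
        have h1 := hden n t
        rw [Real.norm_eq_abs, abs_of_nonneg (by positivity)]
        rw [div_le_one (by linarith)]
        exact h1
      · filter_upwards with t
        by_cases hta : t = a
        · subst hta
          simp only [ha]
          simp only [Set.indicator_of_mem (Set.mem_singleton _)]
          have : ∀ n : ℕ, (1:ℝ) / ((1 - ((a:Set.Icc (0:ℝ) 1):ℝ)) * (n+1) + (a:ℝ)) = 1 := by
            intro n; simp [ha]
          simp only [this, Pi.one_apply]
          exact tendsto_const_nhds.congr (fun n => by norm_num)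
        · rw [Set.indicator_of_notMem (by simpa using hta)]
          have ht1 : (t:ℝ) < 1 := by
            rcases lt_or_eq_of_le t.2.2 with h' | h'
            · exact h'
            · exact absurd (Subtype.ext h') hta
          have hpos : (0:ℝ) < 1 - t := by linarith
          have hd : Filter.Tendsto (fun n : ℕ => (1 - (t:ℝ)) * (n+1) + t) Filter.atTop
              Filter.atTop := by
            apply Filter.tendsto_atTop_add_const_right
            apply Filter.Tendsto.const_mul_atTop hpos
            exact Filter.tendsto_atTop_add_const_right _ _ tendsto_natCast_atTop_atTop
          simpa [one_div, Pi.inv_def] using hd.inv_tendsto_atTop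
    simp only [key] at hconv
    have hlim : (∫ t, Set.indicator {a} (1 : Set.Icc (0:ℝ) 1 → ℝ) t ∂μ) = 1 :=
      (tendsto_nhds_unique tendsto_const_nhds hconv).symm
    rw [integral_indicator_one (measurableSet_singleton a)] at hlim
    have hμa : μ {a} = 1 := (ENNReal.toReal_eq_one_iff _).mp hlim
    exact my_dirac_of_singleton μ a hμa
  · intro h x hx
    rw [hf x hx, h, integral_dirac]
    simp [ha]
end

section
/- Let A, B be positive definite matrices (or positive invertible operators on a Hilbert space). Then A ≤ B if and only if A ≤ A # B, where A # B = A^{1/2}(A^{-1/2}BA^{-1/2})^{1/2}A^{1/2} is the geometric mean; and this is also equivalent to A # B ≤ B. -/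
open scoped ComplexOrder

/-- The geometric mean `A # B = A^{1/2} (A^{-1/2} B A^{-1/2})^{1/2} A^{1/2}` of positive
definite matrices, via the continuous functional calculus. -/
noncomputable def geomMean {n : Type*} [Fintype n] [DecidableEq n]
    (A B : Matrix n n ℂ) : Matrix n n ℂ :=
  let s := cfc Real.sqrt A
  s * cfc Real.sqrt (s⁻¹ * B * s⁻¹) * s

namespace GeomMeanAux

open Matrix

variable {n : Type*} [Fintype n] [DecidableEq n]

lemma posSemidef_conj_iff {N : Matrix n n ℂ} (hN : IsUnit N) (X : Matrix n n ℂ) :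
    (Nᴴ * X * N).PosSemidef ↔ X.PosSemidef := by
  have hNd : IsUnit N.det := (Matrix.isUnit_iff_isUnit_det N).mp hN
  constructor
  · intro h
    have h2 := h.conjTranspose_mul_mul_same (N⁻¹)
    have e : (N⁻¹)ᴴ * (Nᴴ * X * N) * N⁻¹ = X := by
      rw [Matrix.conjTranspose_nonsing_inv]
      calc (Nᴴ)⁻¹ * (Nᴴ * X * N) * N⁻¹
          = (Nᴴ)⁻¹ * Nᴴ * X * (N * N⁻¹) := by noncomm_ring
        _ = X := by
            rw [Matrix.nonsing_inv_mul _ (by rwa [Matrix.det_conjTranspose, isUnit_star]),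
              Matrix.mul_nonsing_inv _ hNd, one_mul, mul_one]
    rwa [e] at h2
  · intro h
    exact h.conjTranspose_mul_mul_same N

lemma posDef_conj {N : Matrix n n ℂ} (hN : IsUnit N) {X : Matrix n n ℂ} (hX : X.PosDef) :
    (Nᴴ * X * N).PosDef := by
  have hNd : IsUnit N.det := (Matrix.isUnit_iff_isUnit_det N).mp hN
  refine Matrix.PosDef.of_dotProduct_mulVec_pos (Matrix.isHermitian_conjTranspose_mul_mul N hX.1) fun x hx => ?_
  have hx' : N *ᵥ x ≠ 0 := by
    intro hc
    apply hx
    have e : N⁻¹ *ᵥ (N *ᵥ x) = x := by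
      rw [Matrix.mulVec_mulVec, Matrix.nonsing_inv_mul _ hNd, Matrix.one_mulVec]
    rw [← e, hc, Matrix.mulVec_zero]
  simpa only [star_mulVec, dotProduct_mulVec, vecMul_vecMul] using hX.dotProduct_mulVec_pos hx'

lemma cfc_eq_conj {A : Matrix n n ℂ} (hA : A.IsHermitian) (f : ℝ → ℝ) :
    cfc f A = (star ((hA.eigenvectorUnitary : Matrix n n ℂ)))ᴴ *
      Matrix.diagonal (RCLike.ofReal ∘ f ∘ hA.eigenvalues) *
      star ((hA.eigenvectorUnitary : Matrix n n ℂ)) := by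
  rw [hA.cfc_eq f, Matrix.IsHermitian.cfc, star_eq_conjTranspose,
    Matrix.conjTranspose_conjTranspose]
  rfl

lemma isUnit_star_eigenvectorUnitary {A : Matrix n n ℂ} (hA : A.IsHermitian) :
    IsUnit (star ((hA.eigenvectorUnitary : Matrix n n ℂ))) := by
  refine IsUnit.star ?_
  exact (Matrix.isUnit_iff_isUnit_det _).mpr (Matrix.UnitaryGroup.det_isUnit hA.eigenvectorUnitary)

lemma posSemidef_cfc_iff {A : Matrix n n ℂ} (hA : A.IsHermitian) (f : ℝ → ℝ) :
    (cfc f A).PosSemidef ↔ ∀ i, 0 ≤ f (hA.eigenvalues i) := by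
  rw [cfc_eq_conj hA f, posSemidef_conj_iff (isUnit_star_eigenvectorUnitary hA),
    Matrix.posSemidef_diagonal_iff]
  constructor
  · intro h i
    have := h i
    simpa using this
  · intro h i
    simpa using h i

lemma posDef_cfc {A : Matrix n n ℂ} (hA : A.IsHermitian) (f : ℝ → ℝ)
    (hf : ∀ i, 0 < f (hA.eigenvalues i)) : (cfc f A).PosDef := by
  rw [cfc_eq_conj hA f]
  refine posDef_conj (isUnit_star_eigenvectorUnitary hA) ?_
  refine Matrix.PosDef.diagonal fun i => ?_
  simpa using hf i

lemma spectrum_pos {A : Matrix n n ℂ} (hA : A.PosDef) {x : ℝ} (hx : x ∈ spectrum ℝ A) :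
    0 < x := by
  rw [Matrix.IsHermitian.spectrum_real_eq_range_eigenvalues hA.1] at hx
  obtain ⟨i, rfl⟩ := hx
  exact hA.eigenvalues_pos i

lemma real_aux {x : ℝ} (hx : 0 < x) :
    (0 ≤ x - 1 ↔ 0 ≤ Real.sqrt x - 1) ∧ (0 ≤ x - 1 ↔ 0 ≤ x - Real.sqrt x) := by
  have h1 : Real.sqrt x * Real.sqrt x = x := Real.mul_self_sqrt hx.le
  have h2 : 0 < Real.sqrt x := Real.sqrt_pos.mpr hx
  constructor <;> constructor <;> intro h <;> nlinarith

end GeomMeanAux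

open GeomMeanAux Matrix in
/-- For positive definite matrices, `A ≤ B` iff `A ≤ A # B` iff `A # B ≤ B`
(Loewner order). -/
theorem stmt_15 {n : Type*} [Fintype n] [DecidableEq n] (A B : Matrix n n ℂ)
    (hA : A.PosDef) (hB : B.PosDef) :
    ((B - A).PosSemidef ↔ (geomMean A B - A).PosSemidef) ∧
    ((B - A).PosSemidef ↔ (B - geomMean A B).PosSemidef) := by
  have hAh : A.IsHermitian := hA.1
  have hAsa : IsSelfAdjoint A := hAh
  set s := cfc Real.sqrt A with hs
  have hsd : s.PosDef := by
    refine posDef_cfc hAh Real.sqrt fun i => Real.sqrt_pos.mpr (hA.eigenvalues_pos i)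
  have hsh : s.IsHermitian := hsd.1
  have hsu : IsUnit s := hsd.isUnit
  have hsdet : IsUnit s.det := (Matrix.isUnit_iff_isUnit_det s).mp hsu
  have hss : s * s = A := by
    rw [hs, ← cfc_mul Real.sqrt Real.sqrt A]
    have h : cfc (fun x : ℝ => Real.sqrt x * Real.sqrt x) A = cfc (id : ℝ → ℝ) A :=
      cfc_congr fun x hx => Real.mul_self_sqrt (spectrum_pos hA hx).le
    rw [h, cfc_id ℝ A]
  -- C := s⁻¹ * B * s⁻¹
  set C : Matrix n n ℂ := s⁻¹ * B * s⁻¹ with hCdef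
  have hsinvh : (s⁻¹)ᴴ = s⁻¹ := by rw [Matrix.conjTranspose_nonsing_inv, hsh.eq]
  have hsinvu : IsUnit (s⁻¹ : Matrix n n ℂ) := Matrix.isUnit_nonsing_inv_iff.mpr hsu
  have hC : C.PosDef := by
    have := posDef_conj hsinvu hB
    rwa [hsinvh] at this
  have hCsa : IsSelfAdjoint C := hC.1
  set r : Matrix n n ℂ := cfc Real.sqrt C with hr
  have hgm : geomMean A B = s * r * s := rfl
  have hB' : s * C * s = B := by
    calc s * (s⁻¹ * B * s⁻¹) * s
        = s * s⁻¹ * B * (s⁻¹ * s) := by noncomm_ring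
      _ = B := by
          rw [Matrix.mul_nonsing_inv _ hsdet, Matrix.nonsing_inv_mul _ hsdet, one_mul, mul_one]
  have eq1 : B - A = s * (C - 1) * s := by
    rw [mul_sub, sub_mul, mul_one, hB', hss]
  have eq2 : geomMean A B - A = s * (r - 1) * s := by
    rw [hgm, mul_sub, sub_mul, mul_one, hss]
  have eq3 : B - geomMean A B = s * (C - r) * s := by
    rw [hgm, mul_sub, sub_mul, hB']
  have key : ∀ X : Matrix n n ℂ, (s * X * s).PosSemidef ↔ X.PosSemidef := by
    intro X
    rw [show s * X * s = sᴴ * X * s from by rw [hsh.eq], posSemidef_conj_iff hsu]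
  have f1 : cfc (fun x : ℝ => x - 1) C = C - 1 := by
    rw [cfc_sub (fun x : ℝ => x) (fun _ : ℝ => 1) C, cfc_id' ℝ C, cfc_const_one ℝ C]
  have f2 : cfc (fun x : ℝ => Real.sqrt x - 1) C = r - 1 := by
    rw [cfc_sub Real.sqrt (fun _ : ℝ => 1) C, cfc_const_one ℝ C, hr]
  have f3 : cfc (fun x : ℝ => x - Real.sqrt x) C = C - r := by
    rw [cfc_sub (fun x : ℝ => x) Real.sqrt C, cfc_id' ℝ C, hr]
  have hev : ∀ i, 0 < hC.1.eigenvalues i := hC.eigenvalues_pos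
  constructor
  · rw [eq1, eq2, key, key, ← f1, ← f2, posSemidef_cfc_iff hC.1, posSemidef_cfc_iff hC.1]
    exact forall_congr' fun i => (real_aux (hev i)).1
  · rw [eq1, eq3, key, key, ← f1, ← f3, posSemidef_cfc_iff hC.1, posSemidef_cfc_iff hC.1]
    exact forall_congr' fun i => (real_aux (hev i)).2
end
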